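/- Let k and n be positive integers. The minimum value of a_0 + a_1 + ... + a_n over all tuples (a_0, ..., a_n) of nonnegative integers satisfying, for each index i, the condition that the sum of all a_j with j ≠ i is at least k, equals ⌈(n+1)k/n⌉. -/

import Mathlib

/-- The minimum value of `a_0 + ... + a_n` over all tuples of nonnegative integers
such that for each index `i` the sum of the `a_j` with `j ≠ i` is at least `k`
equals `⌈(n+1)k/n⌉`. -/
theorem stmt0 (n k : ℕ) (hn : 1 ≤ n) (hk : 1 ≤ k) :
    IsLeast {s : ℤ | ∃ a : Fin (n+1) → ℕ,
        (∀ i : Fin (n+1), (k : ℤ) ≤ ∑ j ∈ Finset.univ.erase i, (a j : ℤ)) ∧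
        s = ∑ j : Fin (n+1), (a j : ℤ)}
      ⌈((((n+1)*k : ℕ) : ℚ)) / (n : ℚ)⌉ := by
  have hn0 : (0:ℚ) < n := by exact_mod_cast hn
  set c := (k + n - 1) / n with hc
  have hcl : k ≤ n * c := by
    have h := Nat.div_add_mod (k + n - 1) n
    rw [← hc] at h
    have h2 := Nat.mod_lt (k + n - 1) (by omega : 0 < n)
    omega
  have hcu : n * c ≤ k + n - 1 := Nat.mul_div_le _ _
  have hcuZ : (n:ℤ) * c ≤ (k:ℤ) + n - 1 := by
    have h := hcu
    zify [show (1:ℕ) ≤ k + n by omega] at h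
    linarith
  have hclZ : (k:ℤ) ≤ (n:ℤ) * c := by exact_mod_cast hcl
  have hc1 : 1 ≤ c := by
    rcases Nat.eq_zero_or_pos c with h | h
    · rw [h, Nat.mul_zero] at hcl; omega
    · exact h
  have hceil : ⌈((((n+1)*k : ℕ) : ℚ)) / (n : ℚ)⌉ = ((k + c : ℕ) : ℤ) := by
    rw [Int.ceil_eq_iff]
    constructor
    · rw [lt_div_iff₀ hn0]
      have : (n : ℚ) * c ≤ (k : ℚ) + n - 1 := by exact_mod_cast hcuZ
      push_cast
      nlinarith
    · rw [div_le_iff₀ hn0]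
      have : (k : ℚ) ≤ (n : ℚ) * c := by exact_mod_cast hclZ
      push_cast
      nlinarith
  rw [hceil]
  set t := k + n + 1 - n * c with ht
  have ht1 : t ≤ n + 1 := by omega
  have a : Fin (n+1) → ℕ := fun i => if (i : ℕ) < t then c else c - 1
  have htz : (t : ℤ) = (k : ℤ) + n + 1 - n * c := by
    have : (t : ℤ) = ((k + n + 1 : ℕ) : ℤ) - ((n * c : ℕ) : ℤ) := by
      rw [ht]; omega
    push_cast at this; linarith
  have hsum : ∑ j : Fin (n+1), ((if (j : ℕ) < t then c else c - 1 : ℕ) : ℤ)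
      = (k : ℤ) + c := by
    rw [Fin.sum_univ_eq_sum_range (fun i => ((if i < t then c else c - 1 : ℕ) : ℤ))]
    rw [← Finset.sum_range_add_sum_Ico _ ht1]
    have h1 : ∑ i ∈ Finset.range t, ((if i < t then c else c - 1 : ℕ) : ℤ)
        = t * c := by
      rw [Finset.sum_congr rfl (fun i hi => by
        rw [if_pos (Finset.mem_range.mp hi)]), Finset.sum_const, Finset.card_range]
      push_cast; ring
    have h2 : ∑ i ∈ Finset.Ico t (n+1), ((if i < t then c else c - 1 : ℕ) : ℤ)
        = ((n:ℤ) + 1 - t) * ((c:ℤ) - 1) := by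
      rw [Finset.sum_congr rfl (fun i hi => by
        rw [if_neg (by have := (Finset.mem_Ico.mp hi).1; omega)]),
        Finset.sum_const, Nat.card_Ico, nsmul_eq_mul]
      have e1 : ((n + 1 - t : ℕ) : ℤ) = (n:ℤ) + 1 - t := by omega
      have e2 : ((c - 1 : ℕ) : ℤ) = (c:ℤ) - 1 := by omega
      rw [e1, e2]
    rw [h1, h2]
    linear_combination htz
  constructor
  · refine ⟨fun i => if (i : ℕ) < t then c else c - 1, fun i => ?_, ?_⟩
    · rw [Finset.sum_erase_eq_sub (Finset.mem_univ i), hsum]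
      have : ((if (i : ℕ) < t then c else c - 1 : ℕ) : ℤ) ≤ c := by
        split <;> omega
      have hck : (k : ℤ) ≤ (n : ℤ) * c := by exact_mod_cast hcl
      linarith
    · rw [hsum]; push_cast; ring
  · rintro s ⟨b, hb, rfl⟩
    have hkey : ∀ i : Fin (n+1), (k : ℤ) ≤ (∑ j : Fin (n+1), (b j : ℤ)) - b i := by
      intro i
      have := hb i
      rwa [Finset.sum_erase_eq_sub (Finset.mem_univ i)] at this
    have hsum2 : ((n + 1 : ℕ) : ℤ) * k ≤ (n : ℤ) * ∑ j : Fin (n+1), (b j : ℤ) := by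
      have h := Finset.sum_le_sum (fun i (_ : i ∈ Finset.univ) => hkey i)
      simp only [Finset.sum_const, Finset.card_univ, Fintype.card_fin,
        Finset.sum_sub_distrib, Finset.sum_const, nsmul_eq_mul] at h
      push_cast at h ⊢
      linarith
    push_cast
    have : (k : ℤ) + c ≤ ∑ j : Fin (n+1), (b j : ℤ) := by
      have hS0 : (0:ℤ) ≤ ∑ j : Fin (n+1), (b j : ℤ) :=
        Finset.sum_nonneg (fun j _ => by positivity)
      have hnz : (k:ℤ) ≤ (n:ℤ) * c := by exact_mod_cast hcl
      have hnz2 : (n:ℤ) * c ≤ (k:ℤ) + n - 1 := by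
        have : ((n*c : ℕ):ℤ) ≤ ((k + n - 1 : ℕ):ℤ) := by exact_mod_cast hcu
        push_cast at this; omega
      push_cast at hsum2
      nlinarith [hsum2]
    linarith
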